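/- arXiv:math/0307186 — 5 statements merged into one kernel-verified Lean document; each statement's English description precedes it below -/
import Mathlib

section
/- Let θ = [[0,1],[−1,0]], T(u) = [[1,u],[0,1]], D(v) = [[v,0],[0,v⁻¹]]. For all v₁, v₂, v₃ ∈ ℝ_{>0}, u₁, u₂, u₃ ∈ ℝ, and ε ∈ {+1,−1}: the product θD(v₁)T(u₁)·θD(v₂)T(u₂)·θD(v₃)T(u₃) equals ε·I if and only if u₁ = ε·v₃/(v₁v₂), u₂ = ε·v₁/(v₂v₃), and u₃ = ε·v₂/(v₃v₁). (Hexagon relation: the holonomy around a triangular face of the graph connection is trivial in PSL(2,ℝ) exactly when each corner parameter equals ε times the opposite-side parameter divided by the product of the two adjacent-side parameters, for a single common sign ε.) -/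
/-- The unipotent matrix `T(u) = [[1,u],[0,1]]`. -/
def matT (u : ℝ) : Matrix (Fin 2) (Fin 2) ℝ := !![1, u; 0, 1]

/-- The diagonal matrix `D(v) = [[v,0],[0,v⁻¹]]`. -/
noncomputable def matD (v : ℝ) : Matrix (Fin 2) (Fin 2) ℝ := !![v, 0; 0, v⁻¹]

/-- The Weyl element `θ = [[0,1],[-1,0]]`. -/
def matθ : Matrix (Fin 2) (Fin 2) ℝ := !![0, 1; -1, 0]

/-- Hexagon relation: for `v₁, v₂, v₃ > 0`, `u₁, u₂, u₃ ∈ ℝ` and `ε ∈ {+1,−1}`, the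
product `θD(v₁)T(u₁)·θD(v₂)T(u₂)·θD(v₃)T(u₃)` equals `ε·I` if and only if
`u₁ = ε·v₃/(v₁v₂)`, `u₂ = ε·v₁/(v₂v₃)` and `u₃ = ε·v₂/(v₃v₁)`. -/
theorem hexagon_relation (v₁ v₂ v₃ : ℝ) (hv₁ : 0 < v₁) (hv₂ : 0 < v₂) (hv₃ : 0 < v₃)
    (u₁ u₂ u₃ ε : ℝ) (hε : ε = 1 ∨ ε = -1) :
    matθ * matD v₁ * matT u₁ * (matθ * matD v₂ * matT u₂) * (matθ * matD v₃ * matT u₃) =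
        ε • (1 : Matrix (Fin 2) (Fin 2) ℝ) ↔
      (u₁ = ε * v₃ / (v₁ * v₂) ∧ u₂ = ε * v₁ / (v₂ * v₃) ∧ u₃ = ε * v₂ / (v₃ * v₁)) := by
  have hv₁' := hv₁.ne'
  have hv₂' := hv₂.ne'
  have hv₃' := hv₃.ne'
  have hv₁₂ : v₁ * v₂ ≠ 0 := by positivity
  have hv₂₃ : v₂ * v₃ ≠ 0 := by positivity
  have hv₃₁ : v₃ * v₁ ≠ 0 := by positivity
  have hε2 : ε * ε = 1 := by rcases hε with h | h <;> subst h <;> norm_num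
  rw [← Matrix.ext_iff]
  simp only [matT, matD, matθ, Matrix.mul_fin_two, Matrix.one_fin_two, Matrix.smul_of,
    Matrix.smul_cons, Matrix.smul_empty, smul_eq_mul, Fin.forall_fin_two,
    Matrix.cons_val', Matrix.cons_val_zero, Matrix.cons_val_one, Matrix.head_cons,
    Matrix.head_fin_const, Matrix.empty_val', Matrix.cons_val_fin_one, Matrix.of_apply]
  constructor
  · rintro ⟨⟨h00, h01⟩, h10, h11⟩
    simp only [zero_mul, mul_zero, add_zero, zero_add, mul_one, one_mul] at h00 h01 h10
    field_simp at h00 h01 h10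
    have hA : v₁ * v₃ * (u₁ * u₂ * v₂ ^ 2 - 1) = 0 := by linear_combination -h10
    have hA' : u₁ * u₂ * v₂ ^ 2 = 1 := by
      rcases mul_eq_zero.mp hA with h | h
      · exact absurd h (by positivity)
      · linarith
    have hB : v₁ * v₂ * (u₂ * u₃ * v₃ ^ 2 - 1) = 0 := by linear_combination v₁ * h01
    have hB' : u₂ * u₃ * v₃ ^ 2 = 1 := by
      rcases mul_eq_zero.mp hB with h | h
      · exact absurd h (by positivity)
      · linarith
    refine ⟨?_, ?_, ?_⟩
    · rw [eq_div_iff hv₁₂]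
      linear_combination (ε * v₃) * hA' - (ε * u₁ * v₂) * h00 - (u₁ * v₁ * v₂) * hε2
    · rw [eq_div_iff hv₂₃]
      linear_combination h00
    · rw [eq_div_iff hv₃₁]
      linear_combination (ε * v₂) * hB' - (ε * u₃ * v₃) * h00 - (u₃ * v₃ * v₁) * hε2
  · rintro ⟨h1, h2, h3⟩
    subst h1 h2 h3
    rcases hε with h | h <;> subst h <;>
      refine ⟨⟨?_, ?_⟩, ?_, ?_⟩ <;> field_simp <;> ring
end

section
/- Let θ = [[0,1],[−1,0]], T(u) = [[1,u],[0,1]], D(v) = [[v,0],[0,v⁻¹]]. If v₁, v₂, v₃ ∈ ℝ_{>0} and u₁, u₂, u₃ ∈ ℝ satisfy θD(v₁)T(u₁)·θD(v₂)T(u₂)·θD(v₃)T(u₃) ∈ {I, −I}, then u₁ ≠ 0 and the remaining parameters are determined by v₁, v₂ and u₁ via v₃ = |u₁|·v₁·v₂, u₂ = 1/(u₁·v₂²), and u₃ = 1/(u₁·v₁²). -/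
/-- If `v₁, v₂, v₃ > 0` and `u₁, u₂, u₃ ∈ ℝ` satisfy
`θD(v₁)T(u₁)·θD(v₂)T(u₂)·θD(v₃)T(u₃) ∈ {I, −I}`, then `u₁ ≠ 0` and the remaining
parameters are determined by `v₁, v₂, u₁` via `v₃ = |u₁|·v₁·v₂`, `u₂ = 1/(u₁·v₂²)`
and `u₃ = 1/(u₁·v₁²)`. -/
theorem hexagon_parameters_determined
    (v₁ v₂ v₃ : ℝ) (hv₁ : 0 < v₁) (hv₂ : 0 < v₂) (hv₃ : 0 < v₃) (u₁ u₂ u₃ : ℝ)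
    (hprod :
      matθ * matD v₁ * matT u₁ * (matθ * matD v₂ * matT u₂) * (matθ * matD v₃ * matT u₃) =
          (1 : Matrix (Fin 2) (Fin 2) ℝ) ∨
      matθ * matD v₁ * matT u₁ * (matθ * matD v₂ * matT u₂) * (matθ * matD v₃ * matT u₃) =
          -(1 : Matrix (Fin 2) (Fin 2) ℝ)) :
    u₁ ≠ 0 ∧ v₃ = |u₁| * v₁ * v₂ ∧ u₂ = 1 / (u₁ * v₂ ^ 2) ∧ u₃ = 1 / (u₁ * v₁ ^ 2) := by
  have h1 := hv₁.ne'
  have h2 := hv₂.ne'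
  have h3 := hv₃.ne'
  rcases hprod with h | h
  · simp [matT, matD, matθ, Matrix.mul_fin_two, Matrix.one_fin_two,
      ← Matrix.ext_iff, Fin.forall_fin_two, funext_iff] at h
    obtain ⟨⟨h00, h01⟩, h10, h11⟩ := h
    rcases h10 with h10 | h10
    swap
    · exact absurd h10 h3
    field_simp at h00 h01 h10
    have hu₁ : u₁ * (v₁ * v₂) = v₃ := by
      refine mul_left_cancel₀ h1 ?_
      linear_combination v₃ * h10 - u₁ * v₁ * v₂ * h00
    have hu₁pos : 0 < u₁ := by nlinarith [mul_pos hv₁ hv₂]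
    refine ⟨hu₁pos.ne', ?_, ?_, ?_⟩
    · rw [abs_of_pos hu₁pos]; linarith
    · have hu : u₁ ≠ 0 := hu₁pos.ne'
      field_simp
      refine mul_left_cancel₀ h1 ?_
      linear_combination h10
    · have hu : u₁ ≠ 0 := hu₁pos.ne'
      field_simp
      refine mul_left_cancel₀ (mul_ne_zero h1 h2) ?_
      linear_combination v₁ * h01 - u₃ * u₁ * v₁ ^ 2 * v₂ * h00 + u₃ * u₂ * v₃ * v₁ * v₂ * hu₁
  · simp [matT, matD, matθ, Matrix.mul_fin_two, Matrix.one_fin_two,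
      ← Matrix.ext_iff, Fin.forall_fin_two, funext_iff] at h
    obtain ⟨⟨h00, h01⟩, h10, h11⟩ := h
    rcases h10 with h10 | h10
    swap
    · exact absurd h10 h3
    field_simp at h00 h01 h10
    have hu₁ : u₁ * (v₁ * v₂) = -v₃ := by
      refine mul_left_cancel₀ h1 ?_
      linear_combination -v₃ * h10 + u₁ * v₁ * v₂ * h00
    have hu₁neg : u₁ < 0 := by nlinarith [mul_pos hv₁ hv₂]
    refine ⟨hu₁neg.ne, ?_, ?_, ?_⟩
    · rw [abs_of_neg hu₁neg]; linarith
    · have hu : u₁ ≠ 0 := hu₁neg.ne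
      field_simp
      refine mul_left_cancel₀ h1 ?_
      linear_combination h10
    · have hu : u₁ ≠ 0 := hu₁neg.ne
      field_simp
      refine mul_left_cancel₀ (mul_ne_zero h1 h2) ?_
      linear_combination v₁ * h01 + u₃ * u₁ * v₁ ^ 2 * v₂ * h00 - u₃ * u₂ * v₃ * v₁ * v₂ * hu₁
end

section
/- Let a, b, c, d, e, e' ∈ ℝ_{>0} and ε₁, ε₂, ε₁', ε₂' ∈ {+1,−1}. The four corner equations relating the two triangulations of an ideal quadrilateral with sides a, b, c, d (diagonal e splitting it into triangles with sides (e,a,b) and (e,c,d) carrying signs ε₁, ε₂; diagonal e' splitting it into triangles with sides (e',d,a) and (e',b,c) carrying signs ε₁', ε₂'), namely: ε₁'·e'/(d·a) = ε₁·b/(e·a) + ε₂·c/(e·d), ε₂'·e'/(b·c) = ε₁·a/(e·b) + ε₂·d/(e·c), ε₁·e/(a·b) = ε₁'·d/(e'·a) + ε₂'·c/(e'·b), and ε₂·e/(c·d) = ε₁'·a/(e'·d) + ε₂'·b/(e'·c), hold simultaneously if and only if ε₁'·ε₂' = ε₁·ε₂ and ε₁'·e·e' = ε₂·a·c + ε₁·b·d.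 -/
set_option maxHeartbeats 1000000


/-- The four corner equations relating the two triangulations of an ideal quadrilateral
with sides `a, b, c, d` (diagonal `e` giving triangles `(e,a,b)`, `(e,c,d)` with signs
`ε₁, ε₂`; diagonal `e'` giving triangles `(e',d,a)`, `(e',b,c)` with signs `ε₁', ε₂'`)
hold simultaneously if and only if `ε₁'·ε₂' = ε₁·ε₂` and
`ε₁'·e·e' = ε₂·a·c + ε₁·b·d`. -/
theorem corner_equations_iff_flip_relations
    (a b c d e e' : ℝ) (ha : 0 < a) (hb : 0 < b) (hc : 0 < c) (hd : 0 < d)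
    (he : 0 < e) (he' : 0 < e') (ε₁ ε₂ ε₁' ε₂' : ℝ)
    (hε₁ : ε₁ = 1 ∨ ε₁ = -1) (hε₂ : ε₂ = 1 ∨ ε₂ = -1)
    (hε₁' : ε₁' = 1 ∨ ε₁' = -1) (hε₂' : ε₂' = 1 ∨ ε₂' = -1) :
    (ε₁' * e' / (d * a) = ε₁ * b / (e * a) + ε₂ * c / (e * d) ∧
     ε₂' * e' / (b * c) = ε₁ * a / (e * b) + ε₂ * d / (e * c) ∧
     ε₁ * e / (a * b) = ε₁' * d / (e' * a) + ε₂' * c / (e' * b) ∧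
     ε₂ * e / (c * d) = ε₁' * a / (e' * d) + ε₂' * b / (e' * c)) ↔
    (ε₁' * ε₂' = ε₁ * ε₂ ∧ ε₁' * e * e' = ε₂ * a * c + ε₁ * b * d) := by
  have hee' := mul_pos he he'
  have hac := mul_pos ha hc
  have hbd := mul_pos hb hd
  have key1 : (ε₁' * e' / (d * a) = ε₁ * b / (e * a) + ε₂ * c / (e * d)) ↔
      ε₁' * e * e' = ε₂ * a * c + ε₁ * b * d := by
    rw [div_add_div _ _ (by positivity) (by positivity),
      div_eq_div_iff (by positivity) (by positivity)]
    constructor <;> intro h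
    · exact mul_left_cancel₀ (show (e * a * d : ℝ) ≠ 0 by positivity)
        (by linear_combination h)
    · linear_combination (e * a * d) * h
  have key2 : (ε₂' * e' / (b * c) = ε₁ * a / (e * b) + ε₂ * d / (e * c)) ↔
      ε₂' * e * e' = ε₁ * a * c + ε₂ * b * d := by
    rw [div_add_div _ _ (by positivity) (by positivity),
      div_eq_div_iff (by positivity) (by positivity)]
    constructor <;> intro h
    · exact mul_left_cancel₀ (show (e * b * c : ℝ) ≠ 0 by positivity)
        (by linear_combination h)
    · linear_combination (e * b * c) * h
  have key3 : (ε₁ * e / (a * b) = ε₁' * d / (e' * a) + ε₂' * c / (e' * b)) ↔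
      ε₁ * e * e' = ε₂' * a * c + ε₁' * b * d := by
    rw [div_add_div _ _ (by positivity) (by positivity),
      div_eq_div_iff (by positivity) (by positivity)]
    constructor <;> intro h
    · exact mul_left_cancel₀ (show (e' * a * b : ℝ) ≠ 0 by positivity)
        (by linear_combination h)
    · linear_combination (e' * a * b) * h
  have key4 : (ε₂ * e / (c * d) = ε₁' * a / (e' * d) + ε₂' * b / (e' * c)) ↔
      ε₂ * e * e' = ε₁' * a * c + ε₂' * b * d := by
    rw [div_add_div _ _ (by positivity) (by positivity),
      div_eq_div_iff (by positivity) (by positivity)]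
    constructor <;> intro h
    · exact mul_left_cancel₀ (show (e' * c * d : ℝ) ≠ 0 by positivity)
        (by linear_combination h)
    · linear_combination (e' * c * d) * h
  rw [key1, key2, key3, key4]
  rcases hε₁ with rfl|rfl <;> rcases hε₂ with rfl|rfl <;>
    rcases hε₁' with rfl|rfl <;> rcases hε₂' with rfl|rfl <;>
    constructor <;> intro h <;>
    first
    | (obtain ⟨h1, h2, h3, h4⟩ := h
       constructor
       · norm_num
       · linarith)
    | (obtain ⟨h1, h2, h3, h4⟩ := h
       exfalso
       linarith)
    | (obtain ⟨hs, h2⟩ := h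
       first
       | (refine ⟨?_, ?_, ?_, ?_⟩ <;> linarith)
       | norm_num at hs)
end

section
/- Let n > 4 and label the vertices of a convex n-gon by ℤ/nℤ. Let A be a set of chords such that: (1) for every three distinct vertices, if one of the three chords spanned by them lies in A then at least two of them do; (2) every side {i, i+1} lies in A; and (3) at least one short diagonal {i, i+2} lies in A. Then there exist two pairwise noncrossing diagonals both in A whose complement subdivides the polygon into two triangles and an (n−2)-gon. -/
/-- `sbtw n a c b`: the vertex `c` lies strictly between `a` and `b` in the
counterclockwise cyclic order on the vertices `ZMod n` of a convex `n`-gon. -/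
def sbtw (n : ℕ) (a c b : ZMod n) : Prop :=
  0 < (c - a).val ∧ (c - a).val < (b - a).val

/-- A side of the convex `n`-gon: a chord of the form `{i, i+1}`. -/
def IsSide (n : ℕ) (s : Finset (ZMod n)) : Prop :=
  ∃ i : ZMod n, s = {i, i + 1}

/-- A diagonal: a chord (2-element set of vertices) that is not a side. -/
def IsDiag (n : ℕ) (s : Finset (ZMod n)) : Prop :=
  s.card = 2 ∧ ¬ IsSide n s

/-- Two chords cross if exactly one endpoint of one of them lies strictly between the
two endpoints of the other in the cyclic order: one endpoint on each of the two open
arcs determined by the other chord. -/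
def Cross (n : ℕ) (s t : Finset (ZMod n)) : Prop :=
  ∃ a b c d : ZMod n, s = {a, b} ∧ t = {c, d} ∧ sbtw n a c b ∧ sbtw n b d a

section aux

lemma pair_eq_cases {α : Type*} [DecidableEq α] {a b c d : α}
    (h : ({a, b} : Finset α) = {c, d}) : (a = c ∧ b = d) ∨ (a = d ∧ b = c) := by
  have ha : a = c ∨ a = d := by
    have : a ∈ ({a, b} : Finset α) := by simp
    rw [h] at this; simpa using this
  have hb : b = c ∨ b = d := by
    have : b ∈ ({a, b} : Finset α) := by simp
    rw [h] at this; simpa using this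
  have hc : c = a ∨ c = b := by
    have : c ∈ ({c, d} : Finset α) := by simp
    rw [← h] at this; simpa using this
  have hd : d = a ∨ d = b := by
    have : d ∈ ({c, d} : Finset α) := by simp
    rw [← h] at this; simpa using this
  rcases ha with rfl | rfl <;> rcases hb with rfl | rfl <;> tauto

lemma small_ne_zero {n : ℕ} (hn : 4 < n) {c : ℕ} (h0 : 0 < c) (h4 : c ≤ 4) :
    (c : ZMod n) ≠ 0 := by
  haveI : NeZero n := ⟨by omega⟩
  intro h
  rw [ZMod.natCast_eq_zero_iff] at h
  have := Nat.le_of_dvd h0 h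
  omega

lemma val_of_small {n : ℕ} (hn : 4 < n) {c : ℕ} (h4 : c ≤ 4) :
    ((c : ZMod n)).val = c := ZMod.val_natCast_of_lt (by omega)

lemma val_of_neg_small {n : ℕ} (hn : 4 < n) {c : ℕ} (h0 : 0 < c) (h4 : c ≤ 4) :
    ((-(c : ZMod n))).val = n - c := by
  have h : (-(c : ZMod n)) = ((n - c : ℕ) : ZMod n) := by
    rw [Nat.cast_sub (by omega), ZMod.natCast_self]; ring
  rw [h]; exact ZMod.val_natCast_of_lt (by omega)

lemma self_ne_add {n : ℕ} {c : ZMod n} (hc : c ≠ 0) (j : ZMod n) : j ≠ j + c := by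
  intro h
  apply hc
  have := congrArg (fun t => t - j) h
  simpa using this.symm

/-- Shape X: diagonals `{j, j+2}` and `{j, j+3}` sharing the vertex `j`. -/
lemma shapeX (n : ℕ) (hn : 4 < n) (A : Set (Finset (ZMod n))) (j : ZMod n)
    (hA1 : ({j, j + 2} : Finset (ZMod n)) ∈ A)
    (hA2 : ({j, j + 3} : Finset (ZMod n)) ∈ A) :
    ∃ d₁ d₂ : Finset (ZMod n), d₁ ∈ A ∧ d₂ ∈ A ∧ IsDiag n d₁ ∧ IsDiag n d₂ ∧
      d₁ ≠ d₂ ∧ ¬ Cross n d₁ d₂ ∧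
      ∃ w x y z : ZMod n, d₁ = {w, x} ∧ d₂ = {y, z} ∧
        (x - w).val + (y - x).val + (z - y).val + (w - z).val = n ∧
        (((x - w).val + 1 = 3 ∧ (z - y).val + 1 = 3 ∧
            (y - x).val + (w - z).val + 2 = n - 2) ∨
         ((x - w).val + 1 = 3 ∧ (y - x).val + (w - z).val + 2 = 3 ∧
            (z - y).val + 1 = n - 2) ∨
         ((z - y).val + 1 = 3 ∧ (y - x).val + (w - z).val + 2 = 3 ∧
            (x - w).val + 1 = n - 2)) := by
  haveI : NeZero n := ⟨by omega⟩
  have nz1 : (1 : ZMod n) ≠ 0 := by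
    exact_mod_cast small_ne_zero hn (c := 1) (by norm_num) (by norm_num)
  have nz2 : (2 : ZMod n) ≠ 0 := by
    exact_mod_cast small_ne_zero hn (c := 2) (by norm_num) (by norm_num)
  have nz3 : (3 : ZMod n) ≠ 0 := by
    exact_mod_cast small_ne_zero hn (c := 3) (by norm_num) (by norm_num)
  have nz4 : (4 : ZMod n) ≠ 0 := by
    exact_mod_cast small_ne_zero hn (c := 4) (by norm_num) (by norm_num)
  have v1 : ((1 : ℕ) : ZMod n).val = 1 := val_of_small hn (by norm_num)
  have v2 : ((2 : ℕ) : ZMod n).val = 2 := val_of_small hn (by norm_num)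
  have vm3 : ((-((3 : ℕ) : ZMod n))).val = n - 3 :=
    val_of_neg_small hn (by norm_num) (by norm_num)
  have e1 : j + 2 - j = ((2 : ℕ) : ZMod n) := by push_cast; ring
  have e2 : j + 3 - (j + 2) = ((1 : ℕ) : ZMod n) := by push_cast; ring
  have e3 : j - (j + 3) = -((3 : ℕ) : ZMod n) := by push_cast; ring
  refine ⟨{j, j + 2}, {j, j + 3}, hA1, hA2, ?_, ?_, ?_, ?_, j, j + 2, j + 3, j,
    rfl, Finset.pair_comm j (j + 3), ?_, ?_⟩
  · refine ⟨Finset.card_pair (self_ne_add nz2 j), ?_⟩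
    rintro ⟨i, hs⟩
    rcases pair_eq_cases hs with ⟨hp, hq⟩ | ⟨hp, hq⟩
    · exact nz1 (by linear_combination hq - hp)
    · exact nz3 (by linear_combination hq - hp)
  · refine ⟨Finset.card_pair (self_ne_add nz3 j), ?_⟩
    rintro ⟨i, hs⟩
    rcases pair_eq_cases hs with ⟨hp, hq⟩ | ⟨hp, hq⟩
    · exact nz2 (by linear_combination hq - hp)
    · exact nz4 (by linear_combination hq - hp)
  · intro h
    rcases pair_eq_cases h with ⟨hp, hq⟩ | ⟨hp, hq⟩
    · exact nz1 (by linear_combination -hq)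
    · exact nz3 (by linear_combination -hp)
  · rintro ⟨a, b, c, d, hab, hcd, hs1, hs2⟩
    rcases pair_eq_cases hab with ⟨rfl, rfl⟩ | ⟨rfl, rfl⟩ <;>
      rcases pair_eq_cases hcd with ⟨rfl, rfl⟩ | ⟨rfl, rfl⟩ <;>
      simp [_root_.sbtw, sub_self] at hs1 hs2
  · rw [e1, e2, e3, sub_self, v1, v2, vm3, ZMod.val_zero]
    omega
  · right; left
    rw [e1, e2, e3, sub_self, v1, v2, vm3, ZMod.val_zero]
    omega

/-- Shape Y: diagonals `{j, j+2}` and `{j+2, j+4}` sharing the vertex `j+2`. -/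
lemma shapeY (n : ℕ) (hn : 4 < n) (A : Set (Finset (ZMod n))) (j : ZMod n)
    (hA1 : ({j, j + 2} : Finset (ZMod n)) ∈ A)
    (hA2 : ({j + 2, j + 4} : Finset (ZMod n)) ∈ A) :
    ∃ d₁ d₂ : Finset (ZMod n), d₁ ∈ A ∧ d₂ ∈ A ∧ IsDiag n d₁ ∧ IsDiag n d₂ ∧
      d₁ ≠ d₂ ∧ ¬ Cross n d₁ d₂ ∧
      ∃ w x y z : ZMod n, d₁ = {w, x} ∧ d₂ = {y, z} ∧
        (x - w).val + (y - x).val + (z - y).val + (w - z).val = n ∧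
        (((x - w).val + 1 = 3 ∧ (z - y).val + 1 = 3 ∧
            (y - x).val + (w - z).val + 2 = n - 2) ∨
         ((x - w).val + 1 = 3 ∧ (y - x).val + (w - z).val + 2 = 3 ∧
            (z - y).val + 1 = n - 2) ∨
         ((z - y).val + 1 = 3 ∧ (y - x).val + (w - z).val + 2 = 3 ∧
            (x - w).val + 1 = n - 2)) := by
  haveI : NeZero n := ⟨by omega⟩
  have nz1 : (1 : ZMod n) ≠ 0 := by
    exact_mod_cast small_ne_zero hn (c := 1) (by norm_num) (by norm_num)
  have nz2 : (2 : ZMod n) ≠ 0 := by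
    exact_mod_cast small_ne_zero hn (c := 2) (by norm_num) (by norm_num)
  have nz3 : (3 : ZMod n) ≠ 0 := by
    exact_mod_cast small_ne_zero hn (c := 3) (by norm_num) (by norm_num)
  have nz4 : (4 : ZMod n) ≠ 0 := by
    exact_mod_cast small_ne_zero hn (c := 4) (by norm_num) (by norm_num)
  have v2 : ((2 : ℕ) : ZMod n).val = 2 := val_of_small hn (by norm_num)
  have vm4 : ((-((4 : ℕ) : ZMod n))).val = n - 4 :=
    val_of_neg_small hn (by norm_num) (by norm_num)
  have e1 : j + 2 - j = ((2 : ℕ) : ZMod n) := by push_cast; ring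
  have e2 : j + 4 - (j + 2) = ((2 : ℕ) : ZMod n) := by push_cast; ring
  have e3 : j - (j + 4) = -((4 : ℕ) : ZMod n) := by push_cast; ring
  refine ⟨{j, j + 2}, {j + 2, j + 4}, hA1, hA2, ?_, ?_, ?_, ?_, j, j + 2, j + 2, j + 4,
    rfl, rfl, ?_, ?_⟩
  · refine ⟨Finset.card_pair (self_ne_add nz2 j), ?_⟩
    rintro ⟨i, hs⟩
    rcases pair_eq_cases hs with ⟨hp, hq⟩ | ⟨hp, hq⟩
    · exact nz1 (by linear_combination hq - hp)
    · exact nz3 (by linear_combination hq - hp)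
  · have hne : j + 2 ≠ j + 4 := by
      intro h; exact nz2 (by linear_combination -h)
    refine ⟨Finset.card_pair hne, ?_⟩
    rintro ⟨i, hs⟩
    rcases pair_eq_cases hs with ⟨hp, hq⟩ | ⟨hp, hq⟩
    · exact nz1 (by linear_combination hq - hp)
    · exact nz3 (by linear_combination hq - hp)
  · intro h
    rcases pair_eq_cases h with ⟨hp, hq⟩ | ⟨hp, hq⟩
    · exact nz2 (by linear_combination -hp)
    · exact nz4 (by linear_combination -hp)
  · rintro ⟨a, b, c, d, hab, hcd, hs1, hs2⟩
    rcases pair_eq_cases hab with ⟨rfl, rfl⟩ | ⟨rfl, rfl⟩ <;>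
      rcases pair_eq_cases hcd with ⟨rfl, rfl⟩ | ⟨rfl, rfl⟩ <;>
      simp [_root_.sbtw, sub_self] at hs1 hs2
  · rw [e1, e2, e3, sub_self, v2, vm4, ZMod.val_zero]
    omega
  · left
    rw [e1, e2, e3, sub_self, v2, vm4, ZMod.val_zero]
    omega

end aux

/-- Let `n > 4` and let `A` be a set of chords of a convex `n`-gon with vertices
`ZMod n` such that: (1) for every three distinct vertices, if one of the three chords
they span lies in `A` then at least two of them do; (2) every side lies in `A`; and
(3) at least one short diagonal `{i, i+2}` lies in `A`.  Then there exist two distinct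
noncrossing diagonals, both in `A`, whose complement subdivides the polygon into two
triangles and an `(n−2)`-gon: the diagonals can be written `{w,x}` and `{y,z}` with
`w, x, y, z` in counterclockwise cyclic order (the gaps `x−w`, `y−x`, `z−y`, `w−z`
summing to `n`), the three regions they cut out having `(x−w)+1`, `(z−y)+1` and
`(y−x)+(w−z)+2` sides, two of which equal `3` and the third `n−2`. -/
theorem two_noncrossing_admissible_diagonals_cutting_two_triangles
    (n : ℕ) (hn : 4 < n) (A : Set (Finset (ZMod n)))
    (h1 : ∀ i j k : ZMod n, i ≠ j → j ≠ k → i ≠ k →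
      ({i, j} ∈ A ∨ {j, k} ∈ A ∨ {i, k} ∈ A) →
      (({i, j} ∈ A ∧ {j, k} ∈ A) ∨ ({j, k} ∈ A ∧ {i, k} ∈ A) ∨
        ({i, j} ∈ A ∧ {i, k} ∈ A)))
    (h2 : ∀ i : ZMod n, {i, i + 1} ∈ A)
    (h3 : ∃ i : ZMod n, {i, i + 2} ∈ A) :
    ∃ d₁ d₂ : Finset (ZMod n), d₁ ∈ A ∧ d₂ ∈ A ∧ IsDiag n d₁ ∧ IsDiag n d₂ ∧
      d₁ ≠ d₂ ∧ ¬ Cross n d₁ d₂ ∧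
      ∃ w x y z : ZMod n, d₁ = {w, x} ∧ d₂ = {y, z} ∧
        (x - w).val + (y - x).val + (z - y).val + (w - z).val = n ∧
        (((x - w).val + 1 = 3 ∧ (z - y).val + 1 = 3 ∧
            (y - x).val + (w - z).val + 2 = n - 2) ∨
         ((x - w).val + 1 = 3 ∧ (y - x).val + (w - z).val + 2 = 3 ∧
            (z - y).val + 1 = n - 2) ∨
         ((z - y).val + 1 = 3 ∧ (y - x).val + (w - z).val + 2 = 3 ∧
            (x - w).val + 1 = n - 2)) := by
  obtain ⟨i, hi⟩ := h3
  have nz1 : (1 : ZMod n) ≠ 0 := by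
    exact_mod_cast small_ne_zero hn (c := 1) (by norm_num) (by norm_num)
  have nz2 : (2 : ZMod n) ≠ 0 := by
    exact_mod_cast small_ne_zero hn (c := 2) (by norm_num) (by norm_num)
  have nz3 : (3 : ZMod n) ≠ 0 := by
    exact_mod_cast small_ne_zero hn (c := 3) (by norm_num) (by norm_num)
  have D1 := h1 i (i + 1) (i + 3) (self_ne_add nz1 i)
    (by intro h; exact nz2 (by linear_combination -h))
    (self_ne_add nz3 i) (Or.inl (h2 i))
  have hD1 : {i + 1, i + 3} ∈ A ∨ {i, i + 3} ∈ A := by tauto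
  rcases hD1 with hB | hA
  · have D2 := h1 (i + 1) (i + 2) (i + 4)
      (by intro h; exact nz1 (by linear_combination -h))
      (by intro h; exact nz2 (by linear_combination -h))
      (by intro h; exact nz3 (by linear_combination -h))
      (Or.inl (by rw [show i + 2 = i + 1 + 1 by ring]; exact h2 (i + 1)))
    have hD2 : {i + 2, i + 4} ∈ A ∨ {i + 1, i + 4} ∈ A := by tauto
    rcases hD2 with hY | hX
    · exact shapeY n hn A i hi hY
    · exact shapeX n hn A (i + 1)
        (by rw [show i + 1 + 2 = i + 3 by ring]; exact hB)
        (by rw [show i + 1 + 3 = i + 4 by ring]; exact hX)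
  · exact shapeX n hn A i hi hA
end

section
/- Let n > 3 and label the vertices of a convex n-gon by ℤ/nℤ. Let A be a set of chords such that: (1) for every three distinct vertices, if one of the three chords spanned by them lies in A then at least two of them do; (2) every side {i, i+1} lies in A; and (3) at least one short diagonal {i, i+2} lies in A. Then there exist n−3 pairwise noncrossing diagonals all lying in A (i.e., the polygon admits a triangulation all of whose diagonals are in A). -/
namespace AdmTri


lemma val_sub {n : ℕ} (hn : 3 < n) {a b : ℕ} (ha : a < n) (hb : b < n) (z : ZMod n) :
    ((z + (b : ZMod n)) - (z + (a : ZMod n))).val = if a ≤ b then b - a else n - (a - b) := by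
  haveI : NeZero n := ⟨by omega⟩
  have h : (z + (b : ZMod n)) - (z + (a : ZMod n)) = ((b : ZMod n) - a) := by ring
  rw [h]
  split_ifs with hab
  · have h2 : (b : ZMod n) - a = ((b - a : ℕ) : ZMod n) := by
      rw [Nat.cast_sub hab]
    rw [h2, ZMod.val_natCast_of_lt (by omega)]
  · have hba : b ≤ a := by omega
    have h2 : (b : ZMod n) - a = -(((a - b : ℕ) : ZMod n)) := by
      rw [Nat.cast_sub hba]; ring
    rw [h2, ZMod.neg_val, if_neg, ZMod.val_natCast_of_lt (by omega)]
    intro h0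
    have := ZMod.val_natCast_of_lt (n := n) (a := a - b) (by omega)
    rw [h0, ZMod.val_zero] at this
    omega

lemma vertex_ne {n : ℕ} (hn : 3 < n) {k : ℕ} (z : ZMod n) (g : ℕ → ℕ)
    (hmono : ∀ a b, a < b → b < k → g a < g b) (hbnd : ∀ i, i < k → g i < n)
    {x y : ℕ} (hx : x < k) (hy : y < k) (hxy : x ≠ y) :
    z + (g x : ZMod n) ≠ z + (g y : ZMod n) := by
  intro h
  rcases Nat.lt_or_ge x y with hlt | hge
  · have h1 := val_sub hn (hbnd x hx) (hbnd y hy) z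
    rw [← h, sub_self, ZMod.val_zero] at h1
    have := hmono x y hlt hy
    split_ifs at h1 <;> omega
  · have hlt : y < x := by omega
    have h1 := val_sub hn (hbnd y hy) (hbnd x hx) z
    rw [h, sub_self, ZMod.val_zero] at h1
    have := hmono y x hlt hx
    split_ifs at h1 <;> omega

lemma gap {k : ℕ} (g : ℕ → ℕ) (hmono : ∀ a b, a < b → b < k → g a < g b) :
    ∀ d i, i + d < k → g i + d ≤ g (i + d) := by
  intro d
  induction d with
  | zero => simp
  | succ d ih =>
    intro i h
    have h1 := ih i (by omega)
    have h2 := hmono (i + d) (i + d + 1) (by omega) (by omega)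
    have h3 : i + (d + 1) = i + d + 1 := by omega
    rw [h3]
    omega

lemma not_side {n : ℕ} (hn : 3 < n) {a b : ZMod n} (h2 : 2 ≤ (b - a).val)
    (h2' : (b - a).val + 2 ≤ n) : ¬ IsSide n {a, b} := by
  haveI : NeZero n := ⟨by omega⟩
  haveI : Fact (1 < n) := ⟨by omega⟩
  rintro ⟨i, hi⟩
  have ha : a ∈ ({i, i + 1} : Finset (ZMod n)) := hi ▸ Finset.mem_insert_self a {b}
  have hb : b ∈ ({i, i + 1} : Finset (ZMod n)) := hi ▸ (by simp)
  have hneg : ((n - 1 : ℕ) : ZMod n) = -1 := by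
    have h0 : ((n - 1 : ℕ) : ZMod n) + 1 = 0 := by
      have : ((n - 1 : ℕ) : ZMod n) + 1 = ((n - 1 + 1 : ℕ) : ZMod n) := by push_cast; ring
      rw [this]
      have : n - 1 + 1 = n := by omega
      rw [this, ZMod.natCast_self]
    linear_combination h0
  have hvneg : ((-1 : ZMod n)).val = n - 1 := by
    rw [← hneg, ZMod.val_natCast_of_lt (by omega)]
  simp only [Finset.mem_insert, Finset.mem_singleton] at ha hb
  rcases ha with rfl | rfl <;> rcases hb with h | h
  · rw [h, sub_self, ZMod.val_zero] at h2; omega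
  · rw [h] at h2 h2'
    have : a + 1 - a = 1 := by ring
    rw [this, ZMod.val_one] at h2; omega
  · rw [h] at h2 h2'
    have : i - (i + 1) = -1 := by ring
    rw [this, hvneg] at h2 h2'; omega
  · rw [h, sub_self, ZMod.val_zero] at h2; omega


lemma sbtw_pos {n : ℕ} (hn : 3 < n) {k : ℕ} (z : ZMod n) (g : ℕ → ℕ)
    (hmono : ∀ a b, a < b → b < k → g a < g b) (hbnd : ∀ i, i < k → g i < n)
    {x y w : ℕ} (hx : x < k) (hy : y < k) (hw : w < k)
    (h : sbtw n (z + (g x : ZMod n)) (z + (g y : ZMod n)) (z + (g w : ZMod n))) :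
    (x < y ∧ y < w) ∨ (y < w ∧ w < x) ∨ (w < x ∧ x < y) := by
  obtain ⟨h1, h2⟩ := h
  rw [val_sub hn (hbnd x hx) (hbnd y hy) z] at h1 h2
  rw [val_sub hn (hbnd x hx) (hbnd w hw) z] at h2
  have fact : ∀ u v : ℕ, v < k → (v ≤ u ∨ g u < g v) := by
    intro u v hv
    rcases Nat.lt_or_ge u v with h' | h'
    · exact Or.inr (hmono u v h' hv)
    · exact Or.inl h'
  have eqf : ∀ u v : ℕ, (u ≠ v ∨ g u = g v) := by
    intro u v
    rcases eq_or_ne u v with h' | h'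
    · exact Or.inr (by rw [h'])
    · exact Or.inl h'
  have f1 := fact x y hy
  have f2 := fact y x hx
  have f3 := fact x w hw
  have f4 := fact w x hx
  have f5 := fact y w hw
  have f6 := fact w y hy
  have f7 := eqf x y
  have f8 := eqf x w
  have f9 := eqf y w
  have b1 := hbnd x hx
  have b2 := hbnd y hy
  have b3 := hbnd w hw
  split_ifs at h1 h2 <;> omega

set_option maxHeartbeats 1600000 in
lemma cross_elim {n : ℕ} (hn : 3 < n) {k : ℕ} (z : ZMod n) (g : ℕ → ℕ)
    (hmono : ∀ a b, a < b → b < k → g a < g b) (hbnd : ∀ i, i < k → g i < n)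
    {a b c d : ℕ} (ha : a < k) (hb : b < k) (hc : c < k) (hd : d < k)
    (h : Cross n {z + (g a : ZMod n), z + (g b : ZMod n)}
      {z + (g c : ZMod n), z + (g d : ZMod n)}) :
    ((((a < c ∧ c < b) ∨ (c < b ∧ b < a) ∨ (b < a ∧ a < c)) ∧
      ((b < d ∧ d < a) ∨ (d < a ∧ a < b) ∨ (a < b ∧ b < d))) ∨
     (((a < d ∧ d < b) ∨ (d < b ∧ b < a) ∨ (b < a ∧ a < d)) ∧
      ((b < c ∧ c < a) ∨ (c < a ∧ a < b) ∨ (a < b ∧ b < c)))) := by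
  obtain ⟨p, q, r, s, hs, ht, h1, h2⟩ := h
  have hp : p = z + (g a : ZMod n) ∨ p = z + (g b : ZMod n) := by
    have : p ∈ ({z + (g a : ZMod n), z + (g b : ZMod n)} : Finset (ZMod n)) :=
      hs ▸ Finset.mem_insert_self p {q}
    simpa using this
  have hq : q = z + (g a : ZMod n) ∨ q = z + (g b : ZMod n) := by
    have : q ∈ ({z + (g a : ZMod n), z + (g b : ZMod n)} : Finset (ZMod n)) :=
      hs ▸ (by simp)
    simpa using this
  have hr : r = z + (g c : ZMod n) ∨ r = z + (g d : ZMod n) := by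
    have : r ∈ ({z + (g c : ZMod n), z + (g d : ZMod n)} : Finset (ZMod n)) :=
      ht ▸ Finset.mem_insert_self r {s}
    simpa using this
  have hv : s = z + (g c : ZMod n) ∨ s = z + (g d : ZMod n) := by
    have : s ∈ ({z + (g c : ZMod n), z + (g d : ZMod n)} : Finset (ZMod n)) :=
      ht ▸ (by simp)
    simpa using this
  rcases hp with rfl | rfl <;> rcases hq with h' | h' <;> rw [h'] at h1 h2 <;>
    rcases hr with rfl | rfl <;> rcases hv with h'' | h'' <;> rw [h''] at h2
  all_goals (
    have B1 := sbtw_pos hn z g hmono hbnd (by assumption) (by assumption) (by assumption) h1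
    have B2 := sbtw_pos hn z g hmono hbnd (by assumption) (by assumption) (by assumption) h2
    omega)

lemma diag_of_spec {n : ℕ} (hn : 3 < n) {k : ℕ} (hk : 3 ≤ k) (z : ZMod n)
    (g : ℕ → ℕ) (hg0 : g 0 = 0)
    (hmono : ∀ a b, a < b → b < k → g a < g b) (hbnd : ∀ i, i < k → g i < n)
    {x y : ℕ} (hx : x < y) (hy : y < k) (hgap : x + 2 ≤ y) (hne : ¬(x = 0 ∧ y = k - 1)) :
    IsDiag n {z + (g x : ZMod n), z + (g y : ZMod n)} := by
  haveI : NeZero n := ⟨by omega⟩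
  have hvs := val_sub hn (hbnd x (by omega)) (hbnd y hy) z
  have hxy : g x ≤ g y := (hmono x y hx hy).le
  rw [if_pos hxy] at hvs
  -- lower bound : g y - g x ≥ 2
  have hlow : g x + (y - x) ≤ g y := by
    have := gap g hmono (y - x) x (by omega)
    have h' : x + (y - x) = y := by omega
    rw [h'] at this
    omega
  -- upper bound : g y - g x ≤ n - 2
  have hup : g y + 2 ≤ g x + n := by
    rcases Nat.eq_zero_or_pos x with rfl | hx0
    · -- x = 0 hence y ≤ k - 2
      have hy2 : y + 1 ≤ k - 1 := by omega
      have := gap g hmono (k - 1 - y) y (by omega)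
      have h' : y + (k - 1 - y) = k - 1 := by omega
      rw [h'] at this
      have := hbnd (k - 1) (by omega)
      omega
    · have : g 0 + x ≤ g x := by
        have := gap g hmono x 0 (by omega)
        simpa using this
      have := hbnd y hy
      omega
  constructor
  · rw [Finset.card_pair]
    intro h
    rw [h, sub_self, ZMod.val_zero] at hvs
    omega
  · apply not_side hn <;> rw [hvs] <;> omega

lemma reb_spec {n : ℕ} (hn : 3 < n) {k : ℕ} (hk : 3 ≤ k) (z : ZMod n) (g : ℕ → ℕ)
    (hg0 : g 0 = 0) (hmono : ∀ a b, a < b → b < k → g a < g b)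
    (hbnd : ∀ i, i < k → g i < n) {b : ℕ} (hb : b < k) :
    ∃ g' : ℕ → ℕ, g' 0 = 0 ∧ (∀ a c, a < c → c < k → g' a < g' c) ∧
      (∀ i, i < k → g' i < n) ∧
      (∀ i, i < k → (z + (g b : ZMod n)) + (g' i : ZMod n) = z + (g ((b + i) % k) : ZMod n)) := by
  haveI : NeZero n := ⟨by omega⟩
  refine ⟨fun i => ((z + (g ((b + i) % k) : ZMod n)) - (z + (g b : ZMod n))).val, ?_, ?_, ?_, ?_⟩
  · simp only [Nat.add_zero, Nat.mod_eq_of_lt hb, sub_self, ZMod.val_zero]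
  · -- strict monotonicity
    have formula : ∀ i, i < k →
        ((z + (g ((b + i) % k) : ZMod n)) - (z + (g b : ZMod n))).val =
        if b + i < k then g (b + i) - g b else n - g b + g (b + i - k) := by
      intro i hi
      split_ifs with hcase
      · rw [Nat.mod_eq_of_lt hcase, val_sub hn (hbnd b hb) (hbnd (b + i) hcase) z]
        have hle : g b ≤ g (b + i) := by
          rcases Nat.eq_zero_or_pos i with rfl | hi0
          · simp
          · exact (hmono b (b + i) (by omega) hcase).le
        rw [if_pos hle]
      · have hmod : (b + i) % k = b + i - k := by
          have h1 : b + i - k < k := by omega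
          have : (b + i) % k = (b + i - k) % k := by
            conv_lhs => rw [show b + i = (b + i - k) + k by omega]
            rw [Nat.add_mod_right]
          rw [this, Nat.mod_eq_of_lt h1]
        rw [hmod, val_sub hn (hbnd b hb) (hbnd (b + i - k) (by omega)) z]
        have hlt : g (b + i - k) < g b := by
          apply hmono _ _ (by omega) hb
        rw [if_neg (by omega)]
        have := hbnd b hb
        omega
    intro a c hac hc
    dsimp only
    rw [formula a (by omega), formula c hc]
    have hga : b + a < k → g b ≤ g (b + a) := by
      intro h'
      rcases Nat.eq_zero_or_pos a with rfl | ha0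
      · simp
      · exact (hmono b (b + a) (by omega) h').le
    split_ifs with h1 h2 h2
    · have := hmono (b + a) (b + c) (by omega) h2
      have := hga h1
      omega
    · have := hbnd (b + a) h1
      have := hga h1
      omega
    · omega
    · have := hmono (b + a - k) (b + c - k) (by omega) (by omega)
      have := hbnd b hb
      omega
  · intro i hi
    exact ZMod.val_lt _
  · intro i hi
    have : (((z + (g ((b + i) % k) : ZMod n)) - (z + (g b : ZMod n))).val : ZMod n) =
        (z + (g ((b + i) % k) : ZMod n)) - (z + (g b : ZMod n)) :=
      ZMod.natCast_rightInverse _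
    rw [this]
    ring

lemma mod_split {k : ℕ} (hk : 0 < k) (x : ℕ) (hx : x < 2 * k) :
    x % k = if x < k then x else x - k := by
  split_ifs with h
  · exact Nat.mod_eq_of_lt h
  · conv_lhs => rw [show x = (x - k) + k by omega]
    rw [Nat.add_mod_right, Nat.mod_eq_of_lt (by omega)]

lemma fan_case {n : ℕ} (hn : 3 < n) (A : Set (Finset (ZMod n))) {k : ℕ} (hk : 4 ≤ k)
    (z : ZMod n) (g : ℕ → ℕ) (hg0 : g 0 = 0)
    (hmono : ∀ a b, a < b → b < k → g a < g b) (hbnd : ∀ i, i < k → g i < n)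
    {j : ℕ} (hj : j < k)
    (hfan : ∀ l, l < k → l ≠ j → {z + (g j : ZMod n), z + (g l : ZMod n)} ∈ A) :
    ∃ D : Finset (Finset (ZMod n)), D.card = k - 3 ∧
      (∀ s ∈ D, IsDiag n s ∧ s ∈ A) ∧
      (∀ s ∈ D, ∀ t ∈ D, ¬ Cross n s t) ∧
      (∀ s ∈ D, ∃ x y, x < y ∧ y < k ∧ x + 2 ≤ y ∧ ¬(x = 0 ∧ y = k - 1) ∧
        s = {z + (g x : ZMod n), z + (g y : ZMod n)}) := by
  obtain ⟨g', hg'0, hmono', hbnd', hcorr⟩ := reb_spec hn (by omega) z g hg0 hmono hbnd hj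
  set F : ℕ → Finset (ZMod n) :=
    fun l => {z + (g j : ZMod n), z + (g ((j + l) % k) : ZMod n)} with hF
  have hm : ∀ l, l < k → (j + l) % k = if j + l < k then j + l else j + l - k := by
    intro l hl
    exact mod_split (by omega) _ (by omega)
  have hmodlt : ∀ l : ℕ, (j + l) % k < k := fun l => Nat.mod_lt _ (by omega)
  have hne_j : ∀ l, 2 ≤ l → l ≤ k - 2 → (j + l) % k ≠ j := by
    intro l h2 h2'
    rw [hm l (by omega)]
    split_ifs <;> omega
  have hspec : ∀ l, 2 ≤ l → l ≤ k - 2 → ∃ x y, x < y ∧ y < k ∧ x + 2 ≤ y ∧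
      ¬(x = 0 ∧ y = k - 1) ∧ F l = {z + (g x : ZMod n), z + (g y : ZMod n)} := by
    intro l h2 h2'
    rcases Nat.lt_or_ge (j + l) k with hc | hc
    · refine ⟨j, j + l, by omega, hc, by omega, ?_, ?_⟩
      · rintro ⟨rfl, h⟩; omega
      · rw [hF]; simp only; rw [hm l (by omega), if_pos hc]
    · refine ⟨j + l - k, j, by omega, hj, by omega, ?_, ?_⟩
      · rintro ⟨h0, rfl⟩; omega
      · rw [hF]; simp only; rw [hm l (by omega), if_neg (by omega), Finset.pair_comm]
  have hFrw : ∀ l, l < k → F l =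
      {(z + (g j : ZMod n)) + (g' 0 : ZMod n), (z + (g j : ZMod n)) + (g' l : ZMod n)} := by
    intro l hl
    rw [hF]; simp only
    rw [hcorr 0 (by omega), hcorr l hl]
    congr 2
    rw [Nat.add_zero, Nat.mod_eq_of_lt hj]
  refine ⟨(Finset.Ico 2 (k - 1)).image F, ?_, ?_, ?_, ?_⟩
  · rw [Finset.card_image_of_injOn, Nat.card_Ico]
    · omega
    · intro l1 h1 l2 h2 hFe
      simp only [Finset.mem_coe, Finset.mem_Ico] at h1 h2
      have hmem : z + (g ((j + l1) % k) : ZMod n) ∈ F l2 := by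
        rw [← hFe, hF]; simp
      rw [hF] at hmem
      simp only [Finset.mem_insert, Finset.mem_singleton] at hmem
      rcases hmem with hmem | hmem
      · exact absurd hmem (vertex_ne hn z g hmono hbnd (hmodlt l1) hj
          (hne_j l1 (by omega) (by omega)))
      · have heq : (j + l1) % k = (j + l2) % k := by
          by_contra hne
          exact vertex_ne hn z g hmono hbnd (hmodlt l1) (hmodlt l2) hne hmem
        rw [hm l1 (by omega), hm l2 (by omega)] at heq
        split_ifs at heq <;> omega
  · intro s hs
    simp only [Finset.mem_image, Finset.mem_Ico] at hs
    obtain ⟨l, ⟨h2, h2'⟩, rfl⟩ := hs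
    obtain ⟨x, y, hx, hy, hgap, hnexy, hFeq⟩ := hspec l h2 (by omega)
    constructor
    · rw [hFeq]
      exact diag_of_spec hn (by omega) z g hg0 hmono hbnd hx hy hgap hnexy
    · rw [hF]; simp only
      exact hfan _ (hmodlt l) (hne_j l h2 (by omega))
  · intro s hs t ht
    simp only [Finset.mem_image, Finset.mem_Ico] at hs ht
    obtain ⟨l1, ⟨hl1, hl1'⟩, rfl⟩ := hs
    obtain ⟨l2, ⟨hl2, hl2'⟩, rfl⟩ := ht
    intro hcross
    rw [hFrw l1 (by omega), hFrw l2 (by omega)] at hcross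
    have := cross_elim hn _ g' hmono' hbnd' (by omega : (0:ℕ) < k) (by omega : l1 < k)
      (by omega : (0:ℕ) < k) (by omega : l2 < k) hcross
    omega
  · intro s hs
    simp only [Finset.mem_image, Finset.mem_Ico] at hs
    obtain ⟨l, ⟨h2, h2'⟩, rfl⟩ := hs
    exact hspec l h2 (by omega)


set_option maxHeartbeats 1000000 in
lemma main {n : ℕ} (hn : 3 < n) (A : Set (Finset (ZMod n)))
    (h1 : ∀ i j k : ZMod n, i ≠ j → j ≠ k → i ≠ k →
      ({i, j} ∈ A ∨ {j, k} ∈ A ∨ {i, k} ∈ A) →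
      (({i, j} ∈ A ∧ {j, k} ∈ A) ∨ ({j, k} ∈ A ∧ {i, k} ∈ A) ∨
        ({i, j} ∈ A ∧ {i, k} ∈ A))) :
    ∀ k : ℕ, 3 ≤ k → ∀ (z : ZMod n) (g : ℕ → ℕ),
      g 0 = 0 → (∀ a b, a < b → b < k → g a < g b) → (∀ i, i < k → g i < n) →
      (∀ i, i + 1 < k → {z + (g i : ZMod n), z + (g (i + 1) : ZMod n)} ∈ A) →
      {z + (g (k - 1) : ZMod n), z + (g 0 : ZMod n)} ∈ A →
      (3 < k →
        (∃ j, j < k ∧ {z + (g ((j + k - 1) % k) : ZMod n), z + (g ((j + 1) % k) : ZMod n)} ∈ A) ∨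
        (∃ j, j < k ∧ ∀ l, l < k → l ≠ j → {z + (g j : ZMod n), z + (g l : ZMod n)} ∈ A)) →
      ∃ D : Finset (Finset (ZMod n)), D.card = k - 3 ∧
        (∀ s ∈ D, IsDiag n s ∧ s ∈ A) ∧
        (∀ s ∈ D, ∀ t ∈ D, ¬ Cross n s t) ∧
        (∀ s ∈ D, ∃ x y, x < y ∧ y < k ∧ x + 2 ≤ y ∧ ¬(x = 0 ∧ y = k - 1) ∧
          s = {z + (g x : ZMod n), z + (g y : ZMod n)}) := by
  intro k
  induction k using Nat.strong_induction_on with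
  | _ k IH =>
  intro hk3 z g hg0 hmono hbnd hsides hwrap hrf
  rcases Nat.eq_or_lt_of_le hk3 with hk3' | hk4'
  · exact ⟨∅, by simp [← hk3'], by simp, by simp, by simp⟩
  have hk4 : 4 ≤ k := hk4'
  haveI : NeZero n := ⟨by omega⟩
  have hcyc : ∀ m, m < k → {z + (g m : ZMod n), z + (g ((m + 1) % k) : ZMod n)} ∈ A := by
    intro m hm
    rcases Nat.lt_or_ge (m + 1) k with h | h
    · rw [Nat.mod_eq_of_lt h]; exact hsides m h
    · have hm1 : m = k - 1 := by omega
      have hmz : (m + 1) % k = 0 := by rw [show m + 1 = k by omega, Nat.mod_self]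
      rw [hmz, hm1]
      exact hwrap
  rcases hrf (by omega) with ⟨j, hj, hrb⟩ | ⟨j, hj, hfanj⟩
  swap
  · exact fan_case hn A hk4 z g hg0 hmono hbnd hj hfanj
  by_cases hfan : ∃ j', j' < k ∧ ∀ l, l < k → l ≠ j' →
      {z + (g j' : ZMod n), z + (g l : ZMod n)} ∈ A
  · obtain ⟨j', hj', hf⟩ := hfan
    exact fan_case hn A hk4 z g hg0 hmono hbnd hj' hf
  -- ear-cutting case
  set b := (j + 1) % k with hbdef
  have hbk : b < k := Nat.mod_lt _ (by omega)
  obtain ⟨g', hg'0, hmono', hbnd', hcorr⟩ := reb_spec hn (by omega) z g hg0 hmono hbnd hbk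
  set z' := z + (g b : ZMod n) with hz'
  have hmono'' : ∀ a c, a < c → c < k - 1 → g' a < g' c := fun a c h h' => hmono' a c h (by omega)
  have hbnd'' : ∀ i, i < k - 1 → g' i < n := fun i h => hbnd' i (by omega)
  have hb_id : (b + (k - 2)) % k = (j + k - 1) % k := by
    rw [hbdef, Nat.mod_add_mod]
    congr 1
    omega
  have hb0 : (b + 0) % k = b := by rw [Nat.add_zero, Nat.mod_eq_of_lt hbk]
  have hjb : j ≠ b := by
    rw [hbdef, mod_split (by omega) _ (by omega)]
    split_ifs <;> omega
  have hsides' : ∀ i, i + 1 < k - 1 →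
      {z' + (g' i : ZMod n), z' + (g' (i + 1) : ZMod n)} ∈ A := by
    intro i hi
    rw [hcorr i (by omega), hcorr (i + 1) (by omega)]
    have h2 : (b + (i + 1)) % k = ((b + i) % k + 1) % k := by
      rw [← Nat.add_assoc]
      exact (Nat.mod_add_mod _ _ _).symm
    rw [h2]
    exact hcyc ((b + i) % k) (Nat.mod_lt _ (by omega))
  have hwrap' : {z' + (g' (k - 1 - 1) : ZMod n), z' + (g' 0 : ZMod n)} ∈ A := by
    rw [show k - 1 - 1 = k - 2 from by omega, hcorr (k - 2) (by omega), hcorr 0 (by omega),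
      hb_id, hb0]
    exact hrb
  -- the transitivity of non-admissibility
  have Ptrans : ∀ p q r : ZMod n,
      (p = q ∨ {p, q} ∉ A) → (q = r ∨ {q, r} ∉ A) → (p = r ∨ {p, r} ∉ A) := by
    intro p q r hpq hqr
    by_cases hpr : p = r
    · exact Or.inl hpr
    rcases hpq with he | hpq
    · rw [he]; exact hqr
    rcases hqr with he | hqr
    · rw [← he]; exact Or.inr hpq
    by_cases hpq' : p = q
    · rw [hpq']; exact Or.inr hqr
    by_cases hqr' : q = r
    · rw [← hqr']; exact Or.inr hpq
    right
    intro hIn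
    rcases h1 p q r hpq' hqr' hpr (Or.inr (Or.inr hIn)) with ⟨hA, _⟩ | ⟨hA, _⟩ | ⟨hA, _⟩
    · exact hpq hA
    · exact hqr hA
    · exact hpq hA
  have hrf' : 3 < k - 1 →
      (∃ j', j' < k - 1 ∧ {z' + (g' ((j' + (k - 1) - 1) % (k - 1)) : ZMod n),
        z' + (g' ((j' + 1) % (k - 1)) : ZMod n)} ∈ A) ∨
      (∃ j', j' < k - 1 ∧ ∀ l, l < k - 1 → l ≠ j' →
        {z' + (g' j' : ZMod n), z' + (g' l : ZMod n)} ∈ A) := by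
    intro hk5
    left
    by_contra hnoR
    push_neg at hnoR
    have short : ∀ i, i < k - 1 →
        {z' + (g' i : ZMod n), z' + (g' ((i + 2) % (k - 1)) : ZMod n)} ∉ A := by
      intro i hi
      have h := hnoR ((i + 1) % (k - 1)) (Nat.mod_lt _ (by omega))
      have e1 : ((i + 1) % (k - 1) + (k - 1) - 1) % (k - 1) = i := by
        rcases Nat.lt_or_ge (i + 1) (k - 1) with h' | h'
        · rw [Nat.mod_eq_of_lt h', show i + 1 + (k - 1) - 1 = i + (k - 1) from by omega,
            Nat.add_mod_right, Nat.mod_eq_of_lt hi]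
        · rw [show i + 1 = k - 1 from by omega, Nat.mod_self,
            show 0 + (k - 1) - 1 = k - 2 from by omega, Nat.mod_eq_of_lt (by omega)]
          omega
      have e2 : ((i + 1) % (k - 1) + 1) % (k - 1) = (i + 2) % (k - 1) := by
        rw [Nat.mod_add_mod]
      rw [e1, e2] at h
      exact h
    have chain : ∀ t i, i < k - 1 →
        (z' + (g' i : ZMod n) = z' + (g' ((i + 2 * t) % (k - 1)) : ZMod n) ∨
         {z' + (g' i : ZMod n), z' + (g' ((i + 2 * t) % (k - 1)) : ZMod n)} ∉ A) := by
      intro t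
      induction t with
      | zero =>
        intro i hi
        have e : (i + 2 * 0) % (k - 1) = i := by simp [Nat.mod_eq_of_lt hi]
        rw [e]
        exact Or.inl rfl
      | succ t ih =>
        intro i hi
        have hmid := ih i hi
        have hstep := short ((i + 2 * t) % (k - 1)) (Nat.mod_lt _ (by omega))
        have e : ((i + 2 * t) % (k - 1) + 2) % (k - 1) = (i + 2 * (t + 1)) % (k - 1) := by
          rw [Nat.mod_add_mod]
          congr 1
        rw [e] at hstep
        exact Ptrans _ _ _ hmid (Or.inr hstep)
    -- derive a fan at j, contradicting hfan
    exfalso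
    apply hfan
    refine ⟨j, hj, ?_⟩
    intro l hl hlj
    set i := if b ≤ l then l - b else l + k - b with hidef
    have hile : i < k := by rw [hidef]; split_ifs <;> omega
    have hbi : (b + i) % k = l := by
      rw [hidef]
      split_ifs with h'
      · rw [show b + (l - b) = l from by omega, Nat.mod_eq_of_lt hl]
      · rw [show b + (l + k - b) = l + k from by omega, Nat.add_mod_right, Nat.mod_eq_of_lt hl]
    have hik : i < k - 1 := by
      rcases Nat.lt_or_ge i (k - 1) with h' | h'
      · exact h'
      exfalso
      apply hlj
      have hieq : i = k - 1 := by omega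
      rw [hieq] at hbi
      have hbk1 : (b + (k - 1)) % k = j := by
        rw [hbdef, Nat.mod_add_mod, show j + 1 + (k - 1) = j + k from by omega,
          Nat.add_mod_right, Nat.mod_eq_of_lt hj]
      omega
    have hvl : z + (g l : ZMod n) = z' + (g' i : ZMod n) := by
      rw [hcorr i (by omega), hbi]
    have sideR : {z + (g j : ZMod n), z' + (g' 0 : ZMod n)} ∈ A := by
      rw [hcorr 0 (by omega), hb0]
      have h' := hcyc j hj
      rw [← hbdef] at h'
      exact h'
    have sideL : {z' + (g' (k - 2) : ZMod n), z + (g j : ZMod n)} ∈ A := by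
      rw [hcorr (k - 2) (by omega), hb_id]
      have h' := hcyc ((j + k - 1) % k) (Nat.mod_lt _ (by omega))
      have e : ((j + k - 1) % k + 1) % k = j := by
        rw [Nat.mod_add_mod, show j + k - 1 + 1 = j + k from by omega,
          Nat.add_mod_right, Nat.mod_eq_of_lt hj]
      rw [e] at h'
      exact h'
    have dj : z + (g j : ZMod n) ≠ z + (g l : ZMod n) :=
      vertex_ne hn z g hmono hbnd hj hl (Ne.symm hlj)
    have djb : z + (g j : ZMod n) ≠ z' + (g' 0 : ZMod n) := by
      rw [hcorr 0 (by omega), hb0]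
      exact vertex_ne hn z g hmono hbnd hj hbk hjb
    have djL : z + (g j : ZMod n) ≠ z' + (g' (k - 2) : ZMod n) := by
      rw [hcorr (k - 2) (by omega), hb_id]
      have : j ≠ (j + k - 1) % k := by
        rw [mod_split (by omega) _ (by omega)]
        split_ifs <;> omega
      exact vertex_ne hn z g hmono hbnd hj (Nat.mod_lt _ (by omega)) this
    rcases Nat.even_or_odd i with ⟨t, ht⟩ | ⟨t, ht⟩
    · -- i even: connect to position 0
      have hch := chain t 0 (by omega)
      have e : (0 + 2 * t) % (k - 1) = i := by
        rw [show 0 + 2 * t = i from by omega, Nat.mod_eq_of_lt hik]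
      rw [e] at hch
      rcases hch with he | hne
      · rw [hvl, ← he]
        exact sideR
      · by_contra hc
        rw [hvl] at hc
        by_cases hi0 : z' + (g' i : ZMod n) = z' + (g' 0 : ZMod n)
        · rw [hi0] at hc
          exact hc sideR
        rw [hvl] at dj
        have hpair : {z' + (g' i : ZMod n), z' + (g' 0 : ZMod n)} ∉ A := by
          rw [Finset.pair_comm]
          exact hne
        rcases h1 (z + (g j : ZMod n)) (z' + (g' i : ZMod n)) (z' + (g' 0 : ZMod n))
          dj hi0 djb (Or.inr (Or.inr sideR)) with ⟨hA, _⟩ | ⟨hA, _⟩ | ⟨hA, _⟩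
        · exact hc hA
        · exact hpair hA
        · exact hc hA
    · -- i odd: connect to position k - 2
      have hch := chain (t + 1) (k - 2) (by omega)
      have e : (k - 2 + 2 * (t + 1)) % (k - 1) = i := by
        rw [show k - 2 + 2 * (t + 1) = i + (k - 1) from by omega,
          Nat.add_mod_right, Nat.mod_eq_of_lt hik]
      rw [e] at hch
      rcases hch with he | hne
      · rw [hvl, ← he, Finset.pair_comm]
        exact sideL
      · by_contra hc
        rw [hvl] at hc
        by_cases hi0 : z' + (g' i : ZMod n) = z' + (g' (k - 2) : ZMod n)
        · rw [hi0, Finset.pair_comm] at hc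
          exact hc sideL
        rw [hvl] at dj
        have hpair : {z' + (g' i : ZMod n), z' + (g' (k - 2) : ZMod n)} ∉ A := by
          rw [Finset.pair_comm]
          exact hne
        have sideL' : {z + (g j : ZMod n), z' + (g' (k - 2) : ZMod n)} ∈ A := by
          rw [Finset.pair_comm]
          exact sideL
        rcases h1 (z + (g j : ZMod n)) (z' + (g' i : ZMod n)) (z' + (g' (k - 2) : ZMod n))
          dj hi0 djL (Or.inr (Or.inr sideL')) with ⟨hA, _⟩ | ⟨hA, _⟩ | ⟨hA, _⟩
        · exact hc hA
        · exact hpair hA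
        · exact hc hA
  -- apply the induction hypothesis to the smaller polygon
  obtain ⟨D', hcard', hdiag', hnc', hspec'⟩ := IH (k - 1) (by omega) (by omega) z' g'
    hg'0 hmono'' hbnd'' hsides' hwrap' hrf'
  have hd_small : ({z + (g ((j + k - 1) % k) : ZMod n), z + (g b : ZMod n)} : Finset (ZMod n)) =
      {z' + (g' (k - 2) : ZMod n), z' + (g' 0 : ZMod n)} := by
    rw [hcorr (k - 2) (by omega), hcorr 0 (by omega), hb_id, hb0]
  have hdspec : ∃ x y, x < y ∧ y < k ∧ x + 2 ≤ y ∧ ¬(x = 0 ∧ y = k - 1) ∧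
      ({z + (g ((j + k - 1) % k) : ZMod n), z + (g b : ZMod n)} : Finset (ZMod n)) =
      {z + (g x : ZMod n), z + (g y : ZMod n)} := by
    rcases eq_or_ne j 0 with rfl | hj0
    · have e1 : (0 + k - 1) % k = k - 1 := by
        rw [show 0 + k - 1 = k - 1 from by omega, Nat.mod_eq_of_lt (by omega)]
      have e2 : b = 1 := by
        rw [hbdef, Nat.mod_eq_of_lt (by omega)]
      rw [e1, e2]
      exact ⟨1, k - 1, by omega, by omega, by omega, by rintro ⟨h', _⟩; omega,
        Finset.pair_comm _ _⟩
    rcases eq_or_ne j (k - 1) with rfl | hjk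
    · have e1 : (k - 1 + k - 1) % k = k - 2 := by
        rw [show k - 1 + k - 1 = (k - 2) + k from by omega, Nat.add_mod_right,
          Nat.mod_eq_of_lt (by omega)]
      have e2 : b = 0 := by
        rw [hbdef, show k - 1 + 1 = k from by omega, Nat.mod_self]
      rw [e1, e2]
      exact ⟨0, k - 2, by omega, by omega, by omega, by rintro ⟨_, h'⟩; omega,
        Finset.pair_comm _ _⟩
    · have e1 : (j + k - 1) % k = j - 1 := by
        rw [show j + k - 1 = (j - 1) + k from by omega, Nat.add_mod_right,
          Nat.mod_eq_of_lt (by omega)]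
      have e2 : b = j + 1 := by
        rw [hbdef, Nat.mod_eq_of_lt (by omega)]
      rw [e1, e2]
      exact ⟨j - 1, j + 1, by omega, by omega, by omega, by rintro ⟨h', h''⟩; omega, rfl⟩
  have hd_not : ({z + (g ((j + k - 1) % k) : ZMod n), z + (g b : ZMod n)} : Finset (ZMod n)) ∉ D' := by
    intro hmem
    obtain ⟨x, y, hx, hy, hgap, hnexy, heq⟩ := hspec' _ hmem
    rw [hd_small] at heq
    have hx' : x = k - 2 ∨ x = 0 := by
      have hmem' : z' + (g' x : ZMod n) ∈
          ({z' + (g' (k - 2) : ZMod n), z' + (g' 0 : ZMod n)} : Finset (ZMod n)) := by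
        rw [heq]; simp
      simp only [Finset.mem_insert, Finset.mem_singleton] at hmem'
      rcases hmem' with h' | h'
      · left
        by_contra hne'
        exact vertex_ne hn z' g' hmono'' hbnd'' (by omega) (by omega) hne' h'
      · right
        by_contra hne'
        exact vertex_ne hn z' g' hmono'' hbnd'' (by omega) (by omega) hne' h'
    have hy' : y = k - 2 ∨ y = 0 := by
      have hmem' : z' + (g' y : ZMod n) ∈
          ({z' + (g' (k - 2) : ZMod n), z' + (g' 0 : ZMod n)} : Finset (ZMod n)) := by
        rw [heq]; simp
      simp only [Finset.mem_insert, Finset.mem_singleton] at hmem'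
      rcases hmem' with h' | h'
      · left
        by_contra hne'
        exact vertex_ne hn z' g' hmono'' hbnd'' (by omega) (by omega) hne' h'
      · right
        by_contra hne'
        exact vertex_ne hn z' g' hmono'' hbnd'' (by omega) (by omega) hne' h'
    omega
  refine ⟨insert ({z + (g ((j + k - 1) % k) : ZMod n), z + (g b : ZMod n)}) D', ?_, ?_, ?_, ?_⟩
  · rw [Finset.card_insert_of_notMem hd_not, hcard']
    omega
  · intro s hs
    rcases Finset.mem_insert.mp hs with rfl | hs'
    · obtain ⟨x, y, hx, hy, hgap, hnexy, heq⟩ := hdspec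
      refine ⟨?_, hrb⟩
      rw [heq]
      exact diag_of_spec hn (by omega) z g hg0 hmono hbnd hx hy hgap hnexy
    · exact hdiag' s hs'
  · intro s hs t ht
    rcases Finset.mem_insert.mp hs with rfl | hs' <;> rcases Finset.mem_insert.mp ht with het | ht'
    · -- s = t = d
      intro hcross
      rw [het, hd_small] at hcross
      have := cross_elim hn z' g' hmono'' hbnd'' (by omega : k - 2 < k - 1)
        (by omega : 0 < k - 1) (by omega : k - 2 < k - 1) (by omega : 0 < k - 1) hcross
      omega
    · -- s = d, t ∈ D'
      intro hcross
      obtain ⟨x, y, hx, hy, hgap, hnexy, heqt⟩ := hspec' t ht'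
      rw [hd_small, heqt] at hcross
      have := cross_elim hn z' g' hmono'' hbnd'' (by omega : k - 2 < k - 1)
        (by omega : 0 < k - 1) (by omega : x < k - 1) (by omega : y < k - 1) hcross
      omega
    · -- s ∈ D', t = d
      intro hcross
      obtain ⟨x, y, hx, hy, hgap, hnexy, heqs⟩ := hspec' s hs'
      rw [het, hd_small, heqs] at hcross
      have := cross_elim hn z' g' hmono'' hbnd'' (by omega : x < k - 1)
        (by omega : y < k - 1) (by omega : k - 2 < k - 1) (by omega : 0 < k - 1) hcross
      omega
    · exact hnc' s hs' t ht'
  · intro s hs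
    rcases Finset.mem_insert.mp hs with rfl | hs'
    · exact hdspec
    · obtain ⟨x, y, hx, hy, hgap, hnexy, heq⟩ := hspec' s hs'
      rw [hcorr x (by omega), hcorr y (by omega)] at heq
      have emx : (b + x) % k = if b + x < k then b + x else b + x - k :=
        mod_split (by omega) _ (by omega)
      have emy : (b + y) % k = if b + y < k then b + y else b + y - k :=
        mod_split (by omega) _ (by omega)
      rcases Nat.lt_or_ge (b + y) k with hcase | hcase
      · refine ⟨b + x, b + y, by omega, hcase, by omega, ?_, ?_⟩
        · rintro ⟨hx0, hyk⟩
          omega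
        · rw [heq, emx, if_pos (by omega), emy, if_pos hcase]
      · rcases Nat.lt_or_ge (b + x) k with hcase2 | hcase2
        · refine ⟨b + y - k, b + x, by omega, hcase2, by omega, ?_, ?_⟩
          · rintro ⟨h0', hk1'⟩
            omega
          · rw [heq, emx, if_pos hcase2, emy, if_neg (by omega), Finset.pair_comm]
        · refine ⟨b + x - k, b + y - k, by omega, by omega, by omega, ?_, ?_⟩
          · rintro ⟨h0', hk1'⟩
            omega
          · rw [heq, emx, if_neg (by omega), emy, if_neg (by omega)]

end AdmTri

/-- Let `n > 3` and let `A` be a set of chords of a convex `n`-gon with vertices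
`ZMod n` such that: (1) for every three distinct vertices, if one of the three chords
they span lies in `A` then at least two of them do; (2) every side lies in `A`; and
(3) at least one short diagonal `{i, i+2}` lies in `A`.  Then there exist `n − 3`
pairwise noncrossing diagonals all lying in `A`, i.e. the polygon admits a
triangulation all of whose diagonals are admissible. -/
theorem admissible_triangulation_of_polygon
    (n : ℕ) (hn : 3 < n) (A : Set (Finset (ZMod n)))
    (h1 : ∀ i j k : ZMod n, i ≠ j → j ≠ k → i ≠ k →
      ({i, j} ∈ A ∨ {j, k} ∈ A ∨ {i, k} ∈ A) →
      (({i, j} ∈ A ∧ {j, k} ∈ A) ∨ ({j, k} ∈ A ∧ {i, k} ∈ A) ∨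
        ({i, j} ∈ A ∧ {i, k} ∈ A)))
    (h2 : ∀ i : ZMod n, {i, i + 1} ∈ A)
    (h3 : ∃ i : ZMod n, {i, i + 2} ∈ A) :
    ∃ D : Finset (Finset (ZMod n)), D.card = n - 3 ∧
      (∀ s ∈ D, IsDiag n s ∧ s ∈ A) ∧
      (∀ s ∈ D, ∀ t ∈ D, ¬ Cross n s t) := by
  haveI : NeZero n := ⟨by omega⟩
  have hneg : ((n - 1 : ℕ) : ZMod n) + 1 = 0 := by
    have e : ((n - 1 + 1 : ℕ) : ZMod n) = ((n - 1 : ℕ) : ZMod n) + 1 := by push_cast; ring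
    rw [← e, show n - 1 + 1 = n from by omega, ZMod.natCast_self]
  have hsides : ∀ i, i + 1 < n →
      {(0 : ZMod n) + ((i : ℕ) : ZMod n), (0 : ZMod n) + ((i + 1 : ℕ) : ZMod n)} ∈ A := by
    intro i _
    have e : ((i + 1 : ℕ) : ZMod n) = ((i : ℕ) : ZMod n) + 1 := by push_cast; ring
    rw [zero_add, zero_add, e]
    exact h2 _
  have hwrap : {(0 : ZMod n) + ((n - 1 : ℕ) : ZMod n), (0 : ZMod n) + ((0 : ℕ) : ZMod n)} ∈ A := by
    rw [zero_add, zero_add, Nat.cast_zero]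
    have h' := h2 ((n - 1 : ℕ) : ZMod n)
    rw [hneg] at h'
    exact h'
  have hrf : 3 < n →
      (∃ j, j < n ∧ {(0 : ZMod n) + (((j + n - 1) % n : ℕ) : ZMod n),
        (0 : ZMod n) + (((j + 1) % n : ℕ) : ZMod n)} ∈ A) ∨
      (∃ j, j < n ∧ ∀ l, l < n → l ≠ j →
        {(0 : ZMod n) + ((j : ℕ) : ZMod n), (0 : ZMod n) + ((l : ℕ) : ZMod n)} ∈ A) := by
    intro _
    left
    obtain ⟨i0, hi0⟩ := h3
    refine ⟨(i0 + 1).val, ZMod.val_lt _, ?_⟩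
    have hv : (((i0 + 1).val : ℕ) : ZMod n) = i0 + 1 := ZMod.natCast_rightInverse _
    have e1 : ((((i0 + 1).val + n - 1) % n : ℕ) : ZMod n) = i0 := by
      rw [ZMod.natCast_mod, show (i0 + 1).val + n - 1 = (i0 + 1).val + (n - 1) from by omega,
        Nat.cast_add, hv]
      have e2 : ((n - 1 : ℕ) : ZMod n) = -1 := by linear_combination hneg
      rw [e2]
      ring
    have e3 : ((((i0 + 1).val + 1) % n : ℕ) : ZMod n) = i0 + 2 := by
      rw [ZMod.natCast_mod, Nat.cast_add, hv]
      push_cast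
      ring
    rw [zero_add, zero_add, e1, e3]
    exact hi0
  obtain ⟨D, hcard, hprop, hnc, -⟩ := AdmTri.main hn A h1 n (by omega) 0 (fun i => i) rfl
    (fun a b h _ => h) (fun i h => h) hsides hwrap hrf
  exact ⟨D, hcard, hprop, hnc⟩
end
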